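/- Let 0 < θ < 1 be a real number. There exists a constant C > 0 (depending only on θ) such that for every real number α and every positive integer n, min_{1 ≤ a ≤ n} ‖ a^θ − α ‖ ≤ C · n^{θ−1}, where the minimum is over integers a with 1 ≤ a ≤ n. -/
import Mathlib


/-- Distance from a real number to the nearest integer. -/
noncomputable def distNearestInt (x : ℝ) : ℝ := |x - round x|

lemma dni_le_abs_sub_int (x : ℝ) (k : ℤ) : distNearestInt x ≤ |x - k| := by
  unfold distNearestInt
  rcases eq_or_ne k (round x) with h | h
  · rw [h]
  · have h0 : round x - k ≠ 0 := sub_ne_zero.mpr (Ne.symm h)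
    have h1 : (1 : ℝ) ≤ |((round x : ℝ)) - (k : ℝ)| := by
      have := Int.one_le_abs h0
      calc (1:ℝ) ≤ |((round x - k : ℤ) : ℝ)| := by exact_mod_cast this
        _ = |(round x : ℝ) - (k : ℝ)| := by push_cast; ring_nf
    have h2 := abs_sub_round x
    have h3 : |(round x : ℝ) - k| ≤ |(round x : ℝ) - x| + |x - k| := abs_sub_le _ _ _
    have h4 : |(round x : ℝ) - x| = |x - round x| := abs_sub_comm _ _
    linarith

/-- discrete crossing lemma -/
lemma crossing (f : ℕ → ℝ) (β : ℝ) : ∀ n m : ℕ, m ≤ n → f m ≤ β → β < f n →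
    ∃ a, m ≤ a ∧ a < n ∧ f a ≤ β ∧ β < f (a + 1) := by
  intro n
  induction n with
  | zero =>
    intro m hm h1 h2
    interval_cases m
    exact absurd h2 (not_lt.mpr h1)
  | succ n ih =>
    intro m hm h1 h2
    rcases Nat.lt_or_ge m (n + 1) with h | h
    · have hm' : m ≤ n := Nat.lt_succ_iff.mp h
      by_cases hfn : f n ≤ β
      · exact ⟨n, hm', Nat.lt_succ_self n, hfn, h2⟩
      · obtain ⟨a, ha1, ha2, ha3, ha4⟩ := ih m hm' h1 (lt_of_not_ge hfn)
        exact ⟨a, ha1, ha2.trans (Nat.lt_succ_self n), ha3, ha4⟩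
    · have : m = n + 1 := le_antisymm hm h
      subst this
      exact absurd h2 (not_lt.mpr h1)

theorem stmt_2 (θ : ℝ) (hθ : 0 < θ) (hθ1 : θ < 1) :
    ∃ C : ℝ, 0 < C ∧ ∀ (α : ℝ) (n : ℕ), 0 < n →
      ∃ a : ℕ, 1 ≤ a ∧ a ≤ n ∧
        distNearestInt ((a : ℝ) ^ θ - α) ≤ C * (n : ℝ) ^ (θ - 1) := by
  set c : ℝ := 1 - (2 : ℝ) ^ (-θ) with hc_def
  have h2θ : (2 : ℝ) ^ (-θ) < 1 :=
    Real.rpow_lt_one_of_one_lt_of_neg one_lt_two (by linarith)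
  have hc : 0 < c := by simp only [hc_def]; linarith
  set B : ℝ := (1 / c) ^ θ⁻¹ with hB_def
  have hB0 : 0 ≤ B := Real.rpow_nonneg (by positivity) _
  set N : ℕ := ⌈B⌉₊ + 4 with hN_def
  refine ⟨(N : ℝ) + 3, by positivity, ?_⟩
  intro α n hn
  have hn1 : (1 : ℝ) ≤ (n : ℝ) := by exact_mod_cast hn
  by_cases hnN : n < N
  · -- small case: a = 1
    refine ⟨1, le_refl 1, hn, ?_⟩
    have h1 : distNearestInt ((1 : ℕ) ^ θ - α) ≤ 1 / 2 := by
      unfold distNearestInt; exact abs_sub_round _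
    have h2 : (1 : ℝ) / (n : ℝ) ≤ (n : ℝ) ^ (θ - 1) := by
      have := Real.rpow_le_rpow_of_exponent_le hn1 (by linarith : (-1 : ℝ) ≤ θ - 1)
      rwa [Real.rpow_neg_one, inv_eq_one_div] at this
    have h3 : (n : ℝ) ≤ (N : ℝ) := by exact_mod_cast hnN.le
    have hnpos : (0 : ℝ) < n := by linarith
    have h4 : (1 : ℝ) ≤ ((N : ℝ) + 3) * (1 / n) := by
      rw [mul_one_div, le_div_iff₀ hnpos]; linarith
    calc distNearestInt ((1 : ℕ) ^ θ - α) ≤ 1 / 2 := h1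
      _ ≤ 1 := by norm_num
      _ ≤ ((N : ℝ) + 3) * (1 / n) := h4
      _ ≤ ((N : ℝ) + 3) * (n : ℝ) ^ (θ - 1) := by
          apply mul_le_mul_of_nonneg_left h2 (by positivity)
  · -- main case: n ≥ N
    push_neg at hnN
    set m : ℕ := n / 2 with hm_def
    have hN4 : 4 ≤ n := le_trans (by omega) hnN
    have hm2 : 2 ≤ m := by omega
    have h3m : n ≤ 3 * m := by omega
    have hmn : m ≤ n := by omega
    have hm1 : (1 : ℝ) ≤ (m : ℝ) := by exact_mod_cast (by omega : 1 ≤ m)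
    set f : ℕ → ℝ := fun a => (a : ℝ) ^ θ with hf_def
    -- total increase ≥ 1
    have hnB : B ≤ (n : ℝ) := by
      have : (⌈B⌉₊ : ℝ) ≤ (n : ℝ) := by exact_mod_cast (by omega : ⌈B⌉₊ ≤ n)
      exact le_trans (Nat.le_ceil B) this
    have hnθ : 1 / c ≤ (n : ℝ) ^ θ := by
      have h := Real.rpow_le_rpow hB0 hnB hθ.le
      rwa [hB_def, Real.rpow_inv_rpow (by positivity) hθ.ne'] at h
    have hmhalf : (m : ℝ) ≤ (n : ℝ) / 2 := by
      rw [le_div_iff₀ (by norm_num : (0:ℝ) < 2)]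
      exact_mod_cast (by omega : m * 2 ≤ n)
    have hfm : f m ≤ (n : ℝ) ^ θ * (2 : ℝ) ^ (-θ) := by
      have h1 : f m ≤ ((n : ℝ) / 2) ^ θ :=
        Real.rpow_le_rpow (by positivity) hmhalf hθ.le
      have h2 : ((n : ℝ) / 2) ^ θ = (n : ℝ) ^ θ * (2 : ℝ) ^ (-θ) := by
        rw [Real.div_rpow (by positivity) (by norm_num), Real.rpow_neg (by norm_num),
          div_eq_mul_inv]
      rwa [h2] at h1
    have htot : f m + 1 ≤ f n := by
      have h1 : (1 : ℝ) ≤ (n : ℝ) ^ θ * c := (div_le_iff₀ hc).mp hnθ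
      have : f n - f m ≥ (n : ℝ) ^ θ * c := by
        simp only [hf_def, hc_def]
        nlinarith [hfm]
      linarith
    -- crossing
    set k : ℤ := ⌈f m - α⌉ with hk_def
    set β : ℝ := α + k with hβ_def
    have hfmβ : f m ≤ β := by
      have := Int.le_ceil (f m - α)
      simp only [hβ_def, hk_def]; linarith
    have hβfn : β < f n := by
      have := Int.ceil_lt_add_one (f m - α)
      have : β < f m + 1 := by simp only [hβ_def, hk_def]; linarith
      linarith
    obtain ⟨a, ham, han, hfa, hfa1⟩ := crossing f β n m hmn hfmβ hβfn
    have ha1 : 1 ≤ a := by omega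
    have hapos : (1 : ℝ) ≤ (a : ℝ) := by exact_mod_cast ha1
    refine ⟨a, ha1, han.le, ?_⟩
    -- step bound : f (a+1) - f a ≤ θ * a^(θ-1)
    have hstep : f (a + 1) ≤ f a + θ * (a : ℝ) ^ (θ - 1) := by
      have hinv : (0 : ℝ) ≤ (a : ℝ)⁻¹ := by positivity
      have hbern := rpow_one_add_le_one_add_mul_self
        (s := (a : ℝ)⁻¹) (by linarith) hθ.le hθ1.le
      -- (1 + 1/a)^θ ≤ 1 + θ/a
      have hapos' : (0 : ℝ) < a := by linarith
      have key : ((a : ℝ) + 1) ^ θ ≤ (a : ℝ) ^ θ * (1 + θ * (a : ℝ)⁻¹) := by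
        have h1 : ((a : ℝ) + 1) = (a : ℝ) * (1 + (a : ℝ)⁻¹) := by
          field_simp
        rw [h1, Real.mul_rpow (by positivity) (by positivity)]
        exact mul_le_mul_of_nonneg_left hbern (Real.rpow_nonneg (by positivity) _)
      have h2 : (a : ℝ) ^ θ * (a : ℝ)⁻¹ = (a : ℝ) ^ (θ - 1) := by
        rw [← Real.rpow_neg_one (a : ℝ), ← Real.rpow_add hapos']
        ring_nf
      have h3 : (a : ℝ) ^ θ * (1 + θ * (a : ℝ)⁻¹)
          = (a : ℝ) ^ θ + θ * ((a : ℝ) ^ θ * (a : ℝ)⁻¹) := by ring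
      simp only [hf_def]
      push_cast
      rw [h3, h2] at key
      exact key
    -- a^(θ-1) ≤ 3 * n^(θ-1)
    have hexp : (a : ℝ) ^ (θ - 1) ≤ 3 * (n : ℝ) ^ (θ - 1) := by
      have han3 : (n : ℝ) / 3 ≤ (a : ℝ) := by
        rw [div_le_iff₀ (by norm_num : (0:ℝ) < 3)]
        exact_mod_cast (by omega : n ≤ a * 3)
      have h1 : (a : ℝ) ^ (θ - 1) ≤ ((n : ℝ) / 3) ^ (θ - 1) :=
        Real.rpow_le_rpow_of_nonpos (by positivity) han3 (by linarith)
      have h2 : ((n : ℝ) / 3) ^ (θ - 1) = (n : ℝ) ^ (θ - 1) * (3 : ℝ) ^ (1 - θ) := by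
        rw [Real.div_rpow (by positivity) (by norm_num), div_eq_mul_inv,
          ← Real.rpow_neg (by norm_num : (0:ℝ) ≤ 3), neg_sub]
      have h3 : (3 : ℝ) ^ (1 - θ) ≤ 3 := by
        calc (3 : ℝ) ^ (1 - θ) ≤ (3 : ℝ) ^ (1 : ℝ) :=
          Real.rpow_le_rpow_of_exponent_le (by norm_num) (by linarith)
        _ = 3 := Real.rpow_one 3
      calc (a : ℝ) ^ (θ - 1) ≤ (n : ℝ) ^ (θ - 1) * (3 : ℝ) ^ (1 - θ) := h2 ▸ h1
        _ ≤ (n : ℝ) ^ (θ - 1) * 3 := by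
            apply mul_le_mul_of_nonneg_left h3 (Real.rpow_nonneg (by positivity) _)
        _ = 3 * (n : ℝ) ^ (θ - 1) := by ring
    -- conclude
    have hdni : distNearestInt ((a : ℝ) ^ θ - α) ≤ |(a : ℝ) ^ θ - α - k| :=
      dni_le_abs_sub_int _ k
    have habs : |(a : ℝ) ^ θ - α - k| = β - f a := by
      rw [abs_of_nonpos (by simp only [hβ_def] at hfmβ hfa ⊢; simp only [hf_def] at hfa; linarith)]
      simp only [hβ_def, hf_def]; ring
    have hfinal : β - f a ≤ 3 * (n : ℝ) ^ (θ - 1) := by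
      have : β - f a ≤ f (a + 1) - f a := by linarith
      have hθa : θ * (a : ℝ) ^ (θ - 1) ≤ (a : ℝ) ^ (θ - 1) := by
        have := Real.rpow_nonneg (by positivity : (0:ℝ) ≤ (a:ℝ)) (θ - 1)
        nlinarith
      linarith [hstep]
    have hC3 : (3 : ℝ) ≤ (N : ℝ) + 3 := le_add_of_nonneg_left (Nat.cast_nonneg N)
    calc distNearestInt ((a : ℝ) ^ θ - α) ≤ β - f a := by rw [← habs]; exact hdni
      _ ≤ 3 * (n : ℝ) ^ (θ - 1) := hfinal
      _ ≤ ((N : ℝ) + 3) * (n : ℝ) ^ (θ - 1) := by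
          apply mul_le_mul_of_nonneg_right hC3 (Real.rpow_nonneg (by positivity) _)
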